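/- Let G = (V, A) be a directed acyclic graph with set of sources S. Then there exists an allocation π of items to two agents such that δ_π(1) ≤ ⌈|S|/2⌉ and δ_π(2) ≤ ⌈|S|/2⌉. Hence the optimal min-max dissatisfaction for two agents with common preference graph G equals exactly ⌈|S|/2⌉. -/

import Mathlib

/-- `u` is dominated by the set `P` of allocated items: some `v ∈ P` equals `u`
or has a directed path to `u`. -/
def Dominated {V : Type*} (A : V → V → Prop) (P : Set V) (u : V) : Prop :=
  ∃ v ∈ P, Relation.ReflTransGen A v u

/-- Dissatisfaction of an agent receiving the set `P`: the number of vertices not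
dominated by `P`. -/
noncomputable def diss {V : Type*} (A : V → V → Prop) (P : Set V) : ℕ :=
  {u : V | ¬ Dominated A P u}.ncard

/-- Satisfaction of an agent receiving the set `P`: the number of vertices
dominated by `P`. -/
noncomputable def sat {V : Type*} (A : V → V → Prop) (P : Set V) : ℕ :=
  {u : V | Dominated A P u}.ncard

/-- The directed graph with arc relation `A` is acyclic. -/
def Acyclic {V : Type*} (A : V → V → Prop) : Prop :=
  ∀ v, ¬ Relation.TransGen A v v

/-- `P` is an antichain: no vertex of `P` is reachable from another vertex of `P`. -/
def IsAntichainIn {V : Type*} (A : V → V → Prop) (P : Set V) : Prop :=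
  ∀ x ∈ P, ∀ y ∈ P, x ≠ y → ¬ Relation.ReflTransGen A x y

private lemma dominated_of_reach {V : Type*} {A : V → V → Prop} {P : Set V} {v u : V}
    (h : Dominated A P v) (hvu : Relation.ReflTransGen A v u) : Dominated A P u := by
  obtain ⟨w, hw, p⟩ := h; exact ⟨w, hw, p.trans hvu⟩

private lemma exists_source_reach {V : Type*} [Finite V] {B : V → V → Prop}
    (hB : Acyclic B) (v : V) :
    ∃ s, (∀ u, ¬ B u s) ∧ Relation.ReflTransGen B s v := by
  haveI : IsIrrefl V (Relation.TransGen B) := ⟨hB⟩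
  have wf := Finite.wellFounded_of_trans_of_irrefl (Relation.TransGen B)
  induction v using wf.induction with
  | _ v ih =>
    by_cases h : ∀ u, ¬ B u v
    · exact ⟨v, h, .refl⟩
    · push_neg at h
      obtain ⟨u, hu⟩ := h
      obtain ⟨s, hs, hp⟩ := ih u (Relation.TransGen.single hu)
      exact ⟨s, hs, hp.tail hu⟩

private lemma dominated_source_iff {V : Type*} {A : V → V → Prop} {v : V}
    (hv : ∀ u, ¬ A u v) (P : Set V) : Dominated A P v ↔ v ∈ P := by
  constructor
  · rintro ⟨w, hw, p⟩
    rcases p.cases_tail with h | ⟨c, _, hc⟩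
    · exact h ▸ hw
    · exact absurd hc (hv c)
  · intro h; exact ⟨v, h, .refl⟩

theorem stmt4 {V : Type*} [Fintype V] (A : V → V → Prop) (hA : Acyclic A) :
    (∃ π : Fin 2 → Set V, (∀ i j, i ≠ j → Disjoint (π i) (π j)) ∧
      diss A (π 0) ≤ ({v : V | ∀ u, ¬ A u v}.ncard + 1) / 2 ∧
      diss A (π 1) ≤ ({v : V | ∀ u, ¬ A u v}.ncard + 1) / 2) ∧
    IsLeast {d : ℕ | ∃ π : Fin 2 → Set V, (∀ i j, i ≠ j → Disjoint (π i) (π j)) ∧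
        max (diss A (π 0)) (diss A (π 1)) = d}
      (({v : V | ∀ u, ¬ A u v}.ncard + 1) / 2) := by
  classical
  set S : Set V := {v : V | ∀ u, ¬ A u v} with hSdef
  set n := S.ncard with hn
  -- Lower bound: any disjoint allocation has max dissatisfaction ≥ (n+1)/2
  have lower : ∀ π : Fin 2 → Set V, (∀ i j, i ≠ j → Disjoint (π i) (π j)) →
      (n + 1) / 2 ≤ max (diss A (π 0)) (diss A (π 1)) := by
    intro π hdisj
    have hsub : S ⊆ {u : V | ¬ Dominated A (π 0) u} ∪ {u : V | ¬ Dominated A (π 1) u} := by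
      intro s hs
      by_contra hcon
      simp only [Set.mem_union, Set.mem_setOf_eq, not_or, not_not] at hcon
      have h0 : s ∈ π 0 := (dominated_source_iff hs (π 0)).mp hcon.1
      have h1 : s ∈ π 1 := (dominated_source_iff hs (π 1)).mp hcon.2
      exact (Set.disjoint_left.mp (hdisj 0 1 (by decide)) h0) h1
    have h1 : n ≤ ({u : V | ¬ Dominated A (π 0) u} ∪ {u : V | ¬ Dominated A (π 1) u}).ncard :=
      Set.ncard_le_ncard hsub (Set.toFinite _)
    have h2 := Set.ncard_union_le {u : V | ¬ Dominated A (π 0) u} {u : V | ¬ Dominated A (π 1) u}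
    have h3 : n ≤ diss A (π 0) + diss A (π 1) := by
      unfold diss; omega
    have h4 : diss A (π 0) ≤ max (diss A (π 0)) (diss A (π 1)) := le_max_left _ _
    have h5 : diss A (π 1) ≤ max (diss A (π 0)) (diss A (π 1)) := le_max_right _ _
    omega
  -- Construction
  obtain ⟨S₁, hS₁sub, hS₁card⟩ : ∃ t ⊆ S, t.ncard = n / 2 :=
    Set.exists_subset_card_eq (Nat.div_le_self _ _)
  set S₂ := S \ S₁ with hS₂def
  have hS₂card : S₂.ncard = n - n / 2 := by
    rw [hS₂def, Set.ncard_diff hS₁sub (Set.toFinite _), hS₁card]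
  -- the subgraph on non-sources
  set A' : V → V → Prop := fun u w => A u w ∧ u ∉ S ∧ w ∉ S with hA'def
  have hA' : Acyclic A' := by
    intro v hv
    exact hA v (Relation.TransGen.mono (fun a b h => h.1) _ _ hv)
  set T : Set V := {v : V | v ∉ S ∧ ∀ u, ¬ A' u v} with hTdef
  -- key covering lemma
  have key : ∀ X : Set V, X ⊆ S → ∀ v, v ∉ S \ X →
      Dominated A (X ∪ (T \ {u : V | Dominated A X u})) v := by
    intro X hXS v hv
    by_cases hvS : v ∈ S
    · have hvX : v ∈ X := by
        by_contra h; exact hv ⟨hvS, h⟩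
      exact ⟨v, Or.inl hvX, .refl⟩
    · obtain ⟨s, hs, hp⟩ := exists_source_reach hA' v
      have hpA : Relation.ReflTransGen A s v := Relation.ReflTransGen.mono (fun a b h => h.1) _ _ hp
      have hsS : s ∉ S := by
        rcases hp.cases_head with h | ⟨c, hc, _⟩
        · exact h ▸ hvS
        · exact hc.2.1
      by_cases hdom : Dominated A X s
      · obtain ⟨w, hw, pw⟩ := hdom
        exact ⟨w, Or.inl hw, pw.trans hpA⟩
      · exact ⟨s, Or.inr ⟨⟨hsS, hs⟩, hdom⟩, hpA⟩
  -- the two pieces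
  set P0 := S₁ ∪ (T \ {u : V | Dominated A S₁ u}) with hP0
  set P1 := S₂ ∪ (T \ {u : V | Dominated A S₂ u}) with hP1
  have hTS : ∀ v ∈ T, v ∈ {u : V | Dominated A S₁ u} ∪ {u : V | Dominated A S₂ u} := by
    rintro v ⟨hvS, hv⟩
    have : ¬ ∀ u, ¬ A u v := by simpa [hSdef] using hvS
    push_neg at this
    obtain ⟨u, hu⟩ := this
    have huS : u ∈ S := by
      by_contra huS
      exact hv u ⟨hu, huS, hvS⟩
    rcases Classical.em (u ∈ S₁) with h | h
    · exact Or.inl ⟨u, h, Relation.ReflTransGen.single hu⟩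
    · exact Or.inr ⟨u, ⟨huS, h⟩, Relation.ReflTransGen.single hu⟩
  have hdisj01 : Disjoint P0 P1 := by
    rw [Set.disjoint_left]
    rintro v (hv | hv) (hw | hw)
    · exact hw.2 hv
    · exact hw.1.1 (hS₁sub hv)
    · exact hv.1.1 (hw.1)
    · rcases hTS v hv.1 with h | h
      · exact hv.2 h
      · exact hw.2 h
  have hd0 : diss A P0 ≤ (n + 1) / 2 := by
    have hsub : {u : V | ¬ Dominated A P0 u} ⊆ S₂ := by
      intro u hu
      by_contra h
      exact hu (key S₁ hS₁sub u (by rwa [← hS₂def]))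
    calc diss A P0 ≤ S₂.ncard := Set.ncard_le_ncard hsub (Set.toFinite _)
    _ = n - n / 2 := hS₂card
    _ ≤ (n + 1) / 2 := by omega
  have hd1 : diss A P1 ≤ (n + 1) / 2 := by
    have hS₂S : S₂ ⊆ S := Set.diff_subset
    have hsub : {u : V | ¬ Dominated A P1 u} ⊆ S \ S₂ := by
      intro u hu
      by_contra h
      exact hu (key S₂ hS₂S u h)
    have hcard : (S \ S₂).ncard = n / 2 := by
      rw [Set.ncard_diff hS₂S (Set.toFinite _), hS₂card]
      omega
    calc diss A P1 ≤ (S \ S₂).ncard := Set.ncard_le_ncard hsub (Set.toFinite _)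
    _ = n / 2 := hcard
    _ ≤ (n + 1) / 2 := by omega
  set π : Fin 2 → Set V := ![P0, P1] with hπ
  have hπ0 : π 0 = P0 := rfl
  have hπ1 : π 1 = P1 := rfl
  have hdisj : ∀ i j, i ≠ j → Disjoint (π i) (π j) := by
    intro i j hij
    fin_cases i <;> fin_cases j
    · exact absurd rfl hij
    · exact hdisj01
    · exact hdisj01.symm
    · exact absurd rfl hij
  refine ⟨⟨π, hdisj, by rwa [hπ0], by rwa [hπ1]⟩, ⟨π, hdisj, ?_⟩, ?_⟩
  · have hl := lower π hdisj
    rw [hπ0, hπ1] at hl ⊢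
    exact le_antisymm (max_le hd0 hd1) hl
  · rintro d ⟨ρ, hρ, rfl⟩
    exact lower ρ hρ
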